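/- arXiv:1301.3017 — 2 statements merged into one kernel-verified Lean document; each statement's English description precedes it below -/
import Mathlib

section
/- Let (λ_j)_{j≥2} be a positive sequence such that j λ_j ln^{1+γ}(j) is decreasing for some γ > 0. Then there exists a constant C(γ) such that for all k ≥ 2, the quantity a_k := Σ_{i≠k} λ_i/|λ_i - λ_k| + λ_k/δ_k satisfies a_k ≤ C(γ) k ln k, where δ_k := min(λ_k - λ_{k+1}, λ_{k-1} - λ_k)/2 (suitably interpreted for k = 1). -/
open Real Finset


-- Bernoulli-type MVT bound for x^{-γ}
lemma bern_aux {γ a b : ℝ} (hγ : 0 < γ) (hb : 0 < b) (hba : b ≤ a) :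
    γ * (a - b) / a ^ (1 + γ) ≤ 1 / b ^ γ - 1 / a ^ γ := by
  have ha : 0 < a := hb.trans_le hba
  have hag : 0 < a ^ γ := rpow_pos_of_pos ha γ
  have hbg : 0 < b ^ γ := rpow_pos_of_pos hb γ
  have hA : 0 < a ^ (1+γ) := rpow_pos_of_pos ha _
  have ha1 : a ^ (1+γ) = a * a ^ γ := by
    rw [Real.rpow_add ha]; simp
  -- key: b^γ * ((1+γ)*a - γ*b) ≤ a^(1+γ)
  have hs : (-1:ℝ) ≤ a / b - 1 := by
    have h0 : (1:ℝ) ≤ a/b := (one_le_div hb).mpr hba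
    linarith
  have hkey0 := one_add_mul_self_le_rpow_one_add hs (by linarith : (1:ℝ) ≤ 1 + γ)
  have h2 : (1 + (a/b - 1)) = a / b := by ring
  rw [h2] at hkey0
  have h3 : (a/b) ^ (1+γ) = a ^ (1+γ) / b ^ (1+γ) := Real.div_rpow ha.le hb.le _
  have hb1 : b ^ (1+γ) = b * b ^ γ := by rw [Real.rpow_add hb]; simp
  have hBpos : (0:ℝ) < b ^ (1+γ) := rpow_pos_of_pos hb _
  have hkey : b ^ γ * ((1+γ)*a - γ*b) ≤ a ^ (1+γ) := by
    have h4 := mul_le_mul_of_nonneg_right hkey0 hBpos.le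
    rw [h3, div_mul_cancel₀ _ hBpos.ne'] at h4
    calc b ^ γ * ((1+γ)*a - γ*b) = (1 + (1+γ)*(a/b-1)) * b^(1+γ) := by
          rw [hb1]; field_simp; ring
      _ ≤ a ^ (1+γ) := h4
  rw [div_le_iff₀ hA, one_div, one_div, sub_mul, ha1]
  -- γ*(a-b) ≤ (b^γ)⁻¹ * (a * a^γ) - (a^γ)⁻¹ * (a * a^γ)
  have e1 : (a^γ)⁻¹ * (a * a^γ) = a := by field_simp
  have e2 : (b^γ)⁻¹ * (a * a^γ) = a * a^γ / b^γ := by ring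
  rw [e1, e2, le_sub_iff_add_le, ← ha1, le_div_iff₀ hbg]
  nlinarith [hkey]

-- log gap
lemma log_gap (j : ℕ) (hj : 1 ≤ j) : 1/((j:ℝ)+1) ≤ Real.log (j+1) - Real.log j := by
  have hj0 : (0:ℝ) < j := by exact_mod_cast hj
  have hx : (0:ℝ) < (j:ℝ)/((j:ℝ)+1) := by positivity
  have h := Real.log_le_sub_one_of_pos hx
  rw [Real.log_div hj0.ne' (by positivity)] at h
  have : (j:ℝ)/((j:ℝ)+1) - 1 = -(1/((j:ℝ)+1)) := by field_simp; ring
  rw [this] at h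
  linarith



lemma tail_sum {γ : ℝ} (hγ : 0 < γ) (m : ℕ) (hm : 3 ≤ m) (s : Finset ℕ)
    (hs : ∀ i ∈ s, m ≤ i) :
    ∑ i ∈ s, 1 / ((i:ℝ) * Real.log i ^ (1+γ)) ≤ 1 / (γ * Real.log (m-1:ℕ) ^ γ) := by
  set c : ℕ → ℝ := fun j => 1 / Real.log j ^ γ with hc
  have hlogpos : ∀ j : ℕ, 2 ≤ j → 0 < Real.log j := by
    intro j hj
    apply Real.log_pos
    exact_mod_cast Nat.lt_of_lt_of_le Nat.one_lt_two hj
  have hdiff : ∀ i : ℕ, 3 ≤ i → γ * (1/(i:ℝ)) / Real.log i ^ (1+γ) ≤ c (i-1) - c i := by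
    intro i hi3
    have hb : 0 < Real.log (i-1:ℕ) := hlogpos _ (by omega)
    have ha : 0 < Real.log i := hlogpos _ (by omega)
    have hba : Real.log (i-1:ℕ) ≤ Real.log i := by
      apply Real.log_le_log (by exact_mod_cast Nat.lt_of_lt_of_le Nat.zero_lt_one (by omega))
      exact_mod_cast Nat.sub_le i 1
    have hbern := bern_aux hγ hb hba
    have hgap := log_gap (i-1) (by omega)
    have hcast : ((i-1:ℕ):ℝ) + 1 = i := by
      have h1 : (1:ℕ) ≤ i := by omega
      push_cast [Nat.cast_sub h1]; ring
    rw [hcast] at hgap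
    calc γ * (1/(i:ℝ)) / Real.log i ^ (1+γ)
        ≤ γ * (Real.log i - Real.log (i-1:ℕ)) / Real.log i ^ (1+γ) := by gcongr
      _ ≤ c (i-1) - c i := hbern
  have hstep : ∀ i : ℕ, 3 ≤ i →
      1 / ((i:ℝ) * Real.log i ^ (1+γ)) ≤ (1/γ) * (c (i-1) - c i) := by
    intro i hi3
    have ha : 0 < Real.log i := hlogpos _ (by omega)
    have hApos : 0 < Real.log i ^ (1+γ) := rpow_pos_of_pos ha _
    have hipos : (0:ℝ) < (i:ℝ) := by exact_mod_cast Nat.lt_of_lt_of_le Nat.zero_lt_one (by omega)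
    have e1 : 1 / ((i:ℝ) * Real.log i ^ (1+γ))
        = (1/γ) * (γ * (1/(i:ℝ)) / Real.log i ^ (1+γ)) := by field_simp
    rw [e1]
    exact mul_le_mul_of_nonneg_left (hdiff i hi3) (by positivity)
  have hdnonneg : ∀ i : ℕ, 3 ≤ i → 0 ≤ c (i-1) - c i := by
    intro i hi3
    refine le_trans ?_ (hdiff i hi3)
    have ha : 0 < Real.log i := hlogpos _ (by omega)
    positivity
  -- sum bound
  have hcm : 0 < Real.log (m-1:ℕ) ^ γ := rpow_pos_of_pos (hlogpos _ (by omega)) _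
  calc ∑ i ∈ s, 1 / ((i:ℝ) * Real.log i ^ (1+γ))
      ≤ ∑ i ∈ s, (1/γ) * (c (i-1) - c i) := by
        apply Finset.sum_le_sum
        intro i hi
        exact hstep i (le_trans hm (hs i hi))
    _ = (1/γ) * ∑ i ∈ s, (c (i-1) - c i) := by rw [Finset.mul_sum]
    _ ≤ (1/γ) * c (m-1) := by
        apply mul_le_mul_of_nonneg_left _ (by positivity)
        rcases s.eq_empty_or_nonempty with rfl | hne
        · simp only [Finset.sum_empty]
          positivity
        · have hM := Finset.le_max' s _ (hne.choose_spec)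
          set M := s.max' hne with hMdef
          have hsub : s ⊆ Finset.Icc m M := by
            intro i hi
            exact Finset.mem_Icc.mpr ⟨hs i hi, Finset.le_max' s i hi⟩
          have h1 : ∑ i ∈ s, (c (i-1) - c i) ≤ ∑ i ∈ Finset.Icc m M, (c (i-1) - c i) := by
            apply Finset.sum_le_sum_of_subset_of_nonneg hsub
            intro i hi _
            exact hdnonneg i (le_trans hm (Finset.mem_Icc.mp hi).1)
          have hmM : m ≤ M := hs _ hne.choose_spec |>.trans (Finset.le_max' s _ hne.choose_spec) |>.trans (le_refl M) |>.trans (le_refl M)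
          have h2 : ∑ i ∈ Finset.Icc m M, (c (i-1) - c i) = c (m-1) - c M := by
            rw [← Finset.Ico_add_one_right_eq_Icc, Finset.sum_Ico_eq_sum_range]
            have htel := Finset.sum_range_sub' (fun j => c (m + j - 1)) (M + 1 - m)
            have e0 : m + 0 - 1 = m - 1 := by omega
            have eM : m + (M + 1 - m) - 1 = M := by omega
            rw [e0, eM] at htel
            rw [← htel]
            apply Finset.sum_congr rfl
            intro j _
            have e : m + (j+1) - 1 = m + j := by omega
            rw [e]
          have h3 : 0 ≤ c M := by
            have := hlogpos M (by omega)
            positivity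
          calc ∑ i ∈ s, (c (i-1) - c i) ≤ c (m-1) - c M := h1.trans_eq h2
            _ ≤ c (m-1) := by linarith
    _ = 1 / (γ * Real.log (m-1:ℕ) ^ γ) := by
        rw [hc]
        field_simp


private lemma harm_le (n : ℕ) : ∑ i ∈ Finset.range n, 1/((i:ℝ)+1) ≤ 1 + Real.log n := by
  have h := harmonic_le_one_add_log n
  have e : (harmonic n : ℝ) = ∑ i ∈ Finset.range n, 1/((i:ℝ)+1) := by
    rw [harmonic]
    push_cast
    simp [one_div]
  linarith [e ▸ h]



set_option maxHeartbeats 2000000 in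
/-- Under Assumption H4 (`j λ_j ln^{1+γ} j` decreasing), the quantity
`a_k = ∑_{i≠k} λ_i/|λ_i-λ_k| + λ_k/δ_k` satisfies `a_k ≤ C(γ) k ln k` for `k ≥ 2`,
where `δ_k = min(λ_k - λ_{k+1}, λ_{k-1} - λ_k)/2`. -/
theorem ak_bound
    (γ : ℝ) (hγ : 0 < γ) (lam : ℕ → ℝ)
    (hpos : ∀ j, 1 ≤ j → 0 < lam j)
    (hdec : ∀ j k : ℕ, 1 ≤ j → j < k → lam k < lam j)
    (hsum : Summable fun j : ℕ => lam (j + 1))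
    (hH4 : ∀ j k : ℕ, 2 ≤ j → j ≤ k →
      (k : ℝ) * lam k * (Real.log k) ^ (1 + γ) ≤ (j : ℝ) * lam j * (Real.log j) ^ (1 + γ)) :
    ∃ C : ℝ, 0 < C ∧ ∀ k, 2 ≤ k →
      (∑' i : {i : ℕ // 1 ≤ i ∧ i ≠ k}, lam i / |lam i - lam k|) +
        lam k / (min (lam k - lam (k + 1)) (lam (k - 1) - lam k) / 2)
      ≤ C * (k : ℝ) * Real.log k := by
  set L : ℕ → ℝ := fun j => Real.log j ^ (1+γ) with hLdef
  have hl1 : 0 < lam 1 := hpos 1 le_rfl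
  have hl2 : 0 < lam 2 := hpos 2 (by omega)
  have h12 : lam 2 < lam 1 := hdec 1 2 le_rfl (by omega)
  set A : ℝ := lam 1 / (lam 1 - lam 2) with hAdef
  set A2 : ℝ := lam 2 / (lam 1 - lam 2) with hA2def
  have hApos : 0 < A := by apply div_pos hl1; linarith
  have hA2pos : 0 < A2 := by apply div_pos hl2; linarith
  have hBγ : (1:ℝ) ≤ (2:ℝ)^γ := by
    calc (1:ℝ) = (2:ℝ)^(0:ℝ) := by rw [Real.rpow_zero]
    _ ≤ (2:ℝ)^γ := Real.rpow_le_rpow_of_exponent_le (by norm_num) hγ.le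
  refine ⟨A + 2*A2 + 19 + 2/γ + 8*(2:ℝ)^γ, by positivity, ?_⟩
  intro k hk
  -- basic facts
  have hkR : (2:ℝ) ≤ (k:ℝ) := by exact_mod_cast hk
  have hkpos : (0:ℝ) < k := by linarith
  have hlam_anti : ∀ a b : ℕ, 1 ≤ a → a ≤ b → lam b ≤ lam a := by
    intro a b ha hab
    rcases eq_or_lt_of_le hab with rfl | h
    · exact le_rfl
    · exact (hdec a b ha h).le
  have hlogpos : ∀ j : ℕ, 2 ≤ j → 0 < Real.log j := by
    intro j hj
    apply Real.log_pos
    exact_mod_cast Nat.lt_of_lt_of_le Nat.one_lt_two hj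
  have hLpos : ∀ j : ℕ, 2 ≤ j → 0 < L j := fun j hj => rpow_pos_of_pos (hlogpos j hj) _
  have hLmono : ∀ i j : ℕ, 2 ≤ i → i ≤ j → L i ≤ L j := by
    intro i j hi hij
    apply Real.rpow_le_rpow (hlogpos i hi).le _ (by linarith)
    apply Real.log_le_log (by exact_mod_cast Nat.lt_of_lt_of_le Nat.zero_lt_two hi)
    exact_mod_cast hij
  have hlogk : 0 < Real.log k := hlogpos k hk
  have hLk : 0 < L k := hLpos k hk
  -- the summand function over ℕ
  set S : Set ℕ := {i : ℕ | 1 ≤ i ∧ i ≠ k} with hSdef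
  set f : ℕ → ℝ := fun i => lam i / |lam i - lam k| with hfdef
  set h : ℕ → ℝ := S.indicator f with hhdef
  have hmem : ∀ i : ℕ, (1 ≤ i ∧ i ≠ k) → h i = lam i / |lam i - lam k| := by
    intro i hi
    exact Set.indicator_of_mem (show i ∈ S from hi) f
  have hnotmem : ∀ i : ℕ, ¬(1 ≤ i ∧ i ≠ k) → h i = 0 := by
    intro i hi
    exact Set.indicator_of_notMem (show i ∉ S from hi) f
  have hnn : ∀ i, 0 ≤ h i := by
    intro i
    apply Set.indicator_nonneg
    intro j hj
    have := hpos j hj.1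
    positivity
  -- gaps
  have hgap_lt : ∀ i : ℕ, 1 ≤ i → i < k → 0 < lam i - lam k := by
    intro i h1 h2; have := hdec i k h1 h2; linarith
  have hgap_gt : ∀ i : ℕ, k < i → 0 < lam k - lam i := by
    intro i hi; have := hdec k i (by omega) hi; linarith
  -- generic bound for i > k
  have hCgen : ∀ i : ℕ, k < i →
      lam i / (lam k - lam i) ≤ (k:ℝ) * L k / ((i:ℝ) * L i - (k:ℝ) * L k) := by
    intro i hi
    have hi2 : 2 ≤ i := by omega
    have hiR : (k:ℝ) < (i:ℝ) := by exact_mod_cast hi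
    have hLi : 0 < L i := hLpos i hi2
    have hLki : L k ≤ L i := hLmono k i hk (by omega)
    have hPQ : (k:ℝ) * L k < (i:ℝ) * L i := by nlinarith
    have hQpos : 0 < (k:ℝ) * L k := by positivity
    have hH := hH4 k i hk (by omega)
    -- (i:ℝ) * lam i * L i ≤ (k:ℝ) * lam k * L k
    have hlik : 0 < lam i := hpos i (by omega)
    have hlk : 0 < lam k := hpos k (by omega)
    have hnum : lam i ≤ (k:ℝ) * L k * lam k / ((i:ℝ) * L i) := by
      rw [le_div_iff₀ (by positivity)]
      nlinarith
    have hden : lam k * (((i:ℝ) * L i - (k:ℝ) * L k) / ((i:ℝ) * L i)) ≤ lam k - lam i := by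
      rw [mul_div_assoc', div_le_iff₀ (by positivity : (0:ℝ) < (i:ℝ) * L i)]
      nlinarith
    have hdpos : 0 < lam k * (((i:ℝ) * L i - (k:ℝ) * L k) / ((i:ℝ) * L i)) := by
      apply mul_pos hlk
      apply div_pos (by linarith) (by positivity)
    calc lam i / (lam k - lam i)
        ≤ ((k:ℝ) * L k * lam k / ((i:ℝ) * L i)) /
            (lam k * (((i:ℝ) * L i - (k:ℝ) * L k) / ((i:ℝ) * L i))) := by
          apply div_le_div₀ (by positivity) hnum hdpos hden
      _ = (k:ℝ) * L k / ((i:ℝ) * L i - (k:ℝ) * L k) := by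
          rw [div_eq_div_iff (by positivity) (by linarith)]
          field_simp
  -- bound for k < i ≤ 2k
  have hC1 : ∀ i : ℕ, k < i → lam i / (lam k - lam i) ≤ (k:ℝ) / ((i-k:ℕ):ℝ) := by
    intro i hi
    have hi2 : 2 ≤ i := by omega
    have hiR : (k:ℝ) < (i:ℝ) := by exact_mod_cast hi
    have hLi : 0 < L i := hLpos i hi2
    have hLki : L k ≤ L i := hLmono k i hk (by omega)
    have hcast : ((i-k:ℕ):ℝ) = (i:ℝ) - (k:ℝ) := by
      push_cast [Nat.cast_sub hi.le]; ring
    refine (hCgen i hi).trans ?_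
    rw [hcast]
    have hd1 : ((i:ℝ) - (k:ℝ)) * L k ≤ (i:ℝ) * L i - (k:ℝ) * L k := by nlinarith
    have hd1' : 0 < ((i:ℝ) - (k:ℝ)) * L k := by
      apply mul_pos (by linarith) hLk
    calc (k:ℝ) * L k / ((i:ℝ) * L i - (k:ℝ) * L k)
        ≤ (k:ℝ) * L k / (((i:ℝ) - (k:ℝ)) * L k) := by
          apply div_le_div_of_nonneg_left (by positivity) hd1' hd1
      _ = (k:ℝ) / ((i:ℝ) - (k:ℝ)) := by
          rw [mul_div_mul_right _ _ hLk.ne']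
  -- bound for i > 2k
  have hC2 : ∀ i : ℕ, 2*k < i →
      lam i / (lam k - lam i) ≤ 2 * ((k:ℝ) * L k) * (1 / ((i:ℝ) * Real.log i ^ (1+γ))) := by
    intro i hi
    have hik : k < i := by omega
    have hi2 : 2 ≤ i := by omega
    have hiR : 2*(k:ℝ) < (i:ℝ) := by exact_mod_cast hi
    have hLi : 0 < L i := hLpos i hi2
    have hLki : L k ≤ L i := hLmono k i hk (by omega)
    refine (hCgen i hik).trans ?_
    have hd : (i:ℝ) * L i / 2 ≤ (i:ℝ) * L i - (k:ℝ) * L k := by nlinarith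
    have hLieq : Real.log i ^ (1+γ) = L i := rfl
    rw [hLieq]
    calc (k:ℝ) * L k / ((i:ℝ) * L i - (k:ℝ) * L k)
        ≤ (k:ℝ) * L k / ((i:ℝ) * L i / 2) := by
          apply div_le_div_of_nonneg_left (by positivity) (by positivity) hd
      _ = 2 * ((k:ℝ) * L k) * (1 / ((i:ℝ) * L i)) := by
          field_simp
  -- bound for 2 ≤ i < k
  have hB : ∀ i : ℕ, 2 ≤ i → i < k →
      lam i / (lam i - lam k) ≤ 2 + 2*(k:ℝ) / ((k-i:ℕ):ℝ) := by
    intro i hi2 hik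
    have hiR : (i:ℝ) < (k:ℝ) := by exact_mod_cast hik
    have hiR2 : (2:ℝ) ≤ (i:ℝ) := by exact_mod_cast hi2
    have hLi : 0 < L i := hLpos i hi2
    have hLik : L i ≤ L k := hLmono i k hi2 hik.le
    have hRQ : (i:ℝ) * L i < (k:ℝ) * L k := by nlinarith
    have hlik : 0 < lam i := hpos i (by omega)
    have hlk : 0 < lam k := hpos k (by omega)
    have hH := hH4 i k hi2 hik.le
    -- (k:ℝ) * lam k * L k ≤ (i:ℝ) * lam i * L i
    have hcast : ((k-i:ℕ):ℝ) = (k:ℝ) - (i:ℝ) := by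
      push_cast [Nat.cast_sub hik.le]; ring
    rw [hcast]
    have hgap : 0 < lam i - lam k := hgap_lt i (by omega) hik
    have hterm : lam i / (lam i - lam k) ≤ (k:ℝ) * L k / ((k:ℝ) * L k - (i:ℝ) * L i) := by
      have hden : lam i * (((k:ℝ) * L k - (i:ℝ) * L i) / ((k:ℝ) * L k)) ≤ lam i - lam k := by
        have hlamk : lam k ≤ (i:ℝ) * L i * lam i / ((k:ℝ) * L k) := by
          rw [le_div_iff₀ (by positivity)]
          nlinarith
        rw [mul_div_assoc']
        rw [div_le_iff₀ (by positivity)]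
        nlinarith
      have hdpos : 0 < lam i * (((k:ℝ) * L k - (i:ℝ) * L i) / ((k:ℝ) * L k)) := by
        apply mul_pos hlik
        apply div_pos (by linarith) (by positivity)
      calc lam i / (lam i - lam k)
          ≤ lam i / (lam i * (((k:ℝ) * L k - (i:ℝ) * L i) / ((k:ℝ) * L k))) := by
            apply div_le_div_of_nonneg_left hlik.le hdpos hden
        _ = (k:ℝ) * L k / ((k:ℝ) * L k - (i:ℝ) * L i) := by
            rw [div_eq_div_iff (by positivity) (by linarith)]
            field_simp
    refine hterm.trans ?_
    by_cases hsp : (i:ℝ) * L i ≤ (k:ℝ) * L k / 2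
    · have : (k:ℝ) * L k / ((k:ℝ) * L k - (i:ℝ) * L i) ≤ 2 := by
        rw [div_le_iff₀ (by linarith)]
        nlinarith
      have hpos2 : 0 ≤ 2*(k:ℝ) / ((k:ℝ) - (i:ℝ)) := by
        apply div_nonneg (by linarith) (by linarith)
      linarith
    · push_neg at hsp
      have hLihalf : L k / 2 ≤ L i := by
        have : (k:ℝ) * L k / 2 < (i:ℝ) * L i := hsp
        nlinarith
      have hd : ((k:ℝ) - (i:ℝ)) * (L k / 2) ≤ (k:ℝ) * L k - (i:ℝ) * L i := by
        nlinarith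
      have hd' : 0 < ((k:ℝ) - (i:ℝ)) * (L k / 2) := by
        apply mul_pos (by linarith) (by linarith)
      have : (k:ℝ) * L k / ((k:ℝ) * L k - (i:ℝ) * L i)
          ≤ (k:ℝ) * L k / (((k:ℝ) - (i:ℝ)) * (L k / 2)) := by
        apply div_le_div_of_nonneg_left (by positivity) hd' hd
      have heq : (k:ℝ) * L k / (((k:ℝ) - (i:ℝ)) * (L k / 2)) = 2*(k:ℝ) / ((k:ℝ) - (i:ℝ)) := by
        rw [div_eq_div_iff (by positivity) (by linarith)]
        ring
      linarith [heq ▸ this]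
  -- i = 1 bound
  have hA1 : lam 1 / (lam 1 - lam k) ≤ A := by
    have hlk2 : lam k ≤ lam 2 := hlam_anti 2 k (by omega) hk
    rw [hAdef]
    apply div_le_div_of_nonneg_left hl1.le (by linarith) (by linarith)
  -- summability
  have hg1 : 0 < lam k - lam (k+1) := hgap_gt (k+1) (by omega)
  have hSummable : Summable h := by
    rw [← summable_nat_add_iff (k+1)]
    have hmaj : Summable (fun j : ℕ => lam (j + (k+1)) / (lam k - lam (k+1))) := by
      have h1 : Summable (fun j : ℕ => lam (j + k + 1)) := by
        have h0 := (summable_nat_add_iff (f := fun j : ℕ => lam (j+1)) k).mpr hsum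
        simpa using h0
      have h2 : Summable (fun j : ℕ => lam (j + (k+1))) := by
        simpa [← add_assoc] using h1
      exact h2.div_const _
    apply Summable.of_nonneg_of_le (fun j => hnn _) _ hmaj
    intro j
    have hik : k < j + (k+1) := by omega
    rw [hmem (j + (k+1)) ⟨by omega, by omega⟩]
    have habs : |lam (j+(k+1)) - lam k| = lam k - lam (j+(k+1)) := by
      rw [abs_of_nonpos (by linarith [hgap_gt _ hik])]; ring
    rw [habs]
    have hle : lam (j+(k+1)) ≤ lam (k+1) := hlam_anti (k+1) _ (by omega) (by omega)
    have hgap2 : lam k - lam (k+1) ≤ lam k - lam (j+(k+1)) := by linarith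
    exact div_le_div_of_nonneg_left (hpos _ (by omega)).le hg1 hgap2
  -- harmonic-type bound
  have hharm : ∑ i ∈ Finset.range k, 1/(((k-i:ℕ)):ℝ) ≤ 1 + Real.log k := by
    have hrefl := Finset.sum_range_reflect (fun i => 1/(((k-i:ℕ)):ℝ)) k
    rw [← hrefl]
    have hcg : ∀ j ∈ Finset.range k, 1/(((k-(k-1-j):ℕ)):ℝ) = 1/((j:ℝ)+1) := by
      intro j hj
      have hj' := Finset.mem_range.mp hj
      have e : k - (k-1-j) = j+1 := by omega
      rw [e]; push_cast; ring
    rw [Finset.sum_congr rfl hcg]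
    exact harm_le k
  -- piece 1 : indices ≤ 2k
  have hpiece1 : ∀ s : Finset ℕ, ∑ i ∈ s.filter (fun i => i ≤ 2*k), h i
      ≤ A + (2*(k:ℝ) + 2*(k:ℝ)*(1+Real.log k)) + (k:ℝ)*(1+Real.log k) := by
    intro s
    have hsub : s.filter (fun i => i ≤ 2*k) ⊆ Finset.range (2*k+1) := by
      intro i hi
      simp only [Finset.mem_filter] at hi
      exact Finset.mem_range.mpr (by omega)
    refine le_trans (Finset.sum_le_sum_of_subset_of_nonneg hsub (fun i _ _ => hnn i)) ?_
    have hd1 : ∑ i ∈ Finset.range (2*k+1), h i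
        = ∑ i ∈ Finset.Ico 0 2, h i + (∑ i ∈ Finset.Ico 2 k, h i
          + (∑ i ∈ Finset.Ico k (k+1), h i + ∑ i ∈ Finset.Ico (k+1) (2*k+1), h i)) := by
      rw [Finset.range_eq_Ico,
        ← Finset.sum_Ico_consecutive h (by omega : (0:ℕ) ≤ 2) (by omega : 2 ≤ 2*k+1),
        ← Finset.sum_Ico_consecutive h (by omega : (2:ℕ) ≤ k) (by omega : k ≤ 2*k+1),
        ← Finset.sum_Ico_consecutive h (by omega : k ≤ k+1) (by omega : k+1 ≤ 2*k+1)]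
    have hI0 : ∑ i ∈ Finset.Ico 0 2, h i ≤ A := by
      have e : Finset.Ico 0 2 = Finset.range 2 := by rw [Finset.range_eq_Ico]
      rw [e, Finset.sum_range_succ, Finset.sum_range_one]
      have h0 : h 0 = 0 := hnotmem 0 (by omega)
      have h1k : h 1 = lam 1 / |lam 1 - lam k| := hmem 1 ⟨le_rfl, by omega⟩
      have habs : |lam 1 - lam k| = lam 1 - lam k := abs_of_pos (hgap_lt 1 le_rfl (by omega))
      rw [h0, h1k, habs]
      linarith [hA1]
    have hIk : ∑ i ∈ Finset.Ico k (k+1), h i = 0 := by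
      rw [Finset.sum_Ico_eq_sum_range]
      have e : k+1-k = 1 := by omega
      rw [e, Finset.sum_range_one]
      exact hnotmem (k+0) (by omega)
    have hI2 : ∑ i ∈ Finset.Ico 2 k, h i ≤ 2*(k:ℝ) + 2*(k:ℝ)*(1+Real.log k) := by
      have hle : ∀ i ∈ Finset.Ico 2 k, h i ≤ 2 + 2*(k:ℝ)/(((k-i:ℕ)):ℝ) := by
        intro i hi
        obtain ⟨h2i, hik⟩ := Finset.mem_Ico.mp hi
        rw [hmem i ⟨by omega, by omega⟩, abs_of_pos (hgap_lt i (by omega) hik)]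
        exact hB i h2i hik
      refine le_trans (Finset.sum_le_sum hle) ?_
      rw [Finset.sum_add_distrib]
      have hc1 : ∑ _i ∈ Finset.Ico 2 k, (2:ℝ) ≤ 2*(k:ℝ) := by
        rw [Finset.sum_const, Nat.card_Ico, nsmul_eq_mul]
        have hcard : ((k-2:ℕ):ℝ) ≤ (k:ℝ) := by
          exact_mod_cast Nat.cast_le.mpr (Nat.sub_le k 2)
        linarith
      have hc2 : ∑ i ∈ Finset.Ico 2 k, 2*(k:ℝ)/(((k-i:ℕ)):ℝ) ≤ 2*(k:ℝ)*(1+Real.log k) := by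
        have e : ∑ i ∈ Finset.Ico 2 k, 2*(k:ℝ)/(((k-i:ℕ)):ℝ)
            = 2*(k:ℝ) * ∑ i ∈ Finset.Ico 2 k, 1/(((k-i:ℕ)):ℝ) := by
          rw [Finset.mul_sum]
          apply Finset.sum_congr rfl
          intro i _
          ring
        rw [e]
        have hsub2 : Finset.Ico 2 k ⊆ Finset.range k := by
          intro i hi
          exact Finset.mem_range.mpr (Finset.mem_Ico.mp hi).2
        have h1 : ∑ i ∈ Finset.Ico 2 k, 1/(((k-i:ℕ)):ℝ)
            ≤ ∑ i ∈ Finset.range k, 1/(((k-i:ℕ)):ℝ) :=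
          Finset.sum_le_sum_of_subset_of_nonneg hsub2 (fun i _ _ => by positivity)
        have h2 := h1.trans hharm
        have hsumnn : (0:ℝ) ≤ ∑ i ∈ Finset.Ico 2 k, 1/(((k-i:ℕ)):ℝ) :=
          Finset.sum_nonneg (fun i _ => by positivity)
        nlinarith
      linarith
    have hI3 : ∑ i ∈ Finset.Ico (k+1) (2*k+1), h i ≤ (k:ℝ)*(1+Real.log k) := by
      have hle : ∀ i ∈ Finset.Ico (k+1) (2*k+1), h i ≤ (k:ℝ)/(((i-k:ℕ)):ℝ) := by
        intro i hi
        obtain ⟨h1i, hi2⟩ := Finset.mem_Ico.mp hi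
        have hik : k < i := by omega
        rw [hmem i ⟨by omega, by omega⟩]
        have habs : |lam i - lam k| = lam k - lam i := by
          rw [abs_of_neg (by linarith [hgap_gt i hik])]
          ring
        rw [habs]
        exact hC1 i hik
      refine le_trans (Finset.sum_le_sum hle) ?_
      have heq : ∑ i ∈ Finset.Ico (k+1) (2*k+1), (k:ℝ)/(((i-k:ℕ)):ℝ)
          = ∑ j ∈ Finset.range k, (k:ℝ)/((j:ℝ)+1) := by
        rw [Finset.sum_Ico_eq_sum_range]
        have e : 2*k+1 - (k+1) = k := by omega
        rw [e]
        apply Finset.sum_congr rfl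
        intro j _
        have e2 : (k+1+j) - k = j+1 := by omega
        rw [e2]
        push_cast
        ring
      rw [heq]
      have e3 : ∑ j ∈ Finset.range k, (k:ℝ)/((j:ℝ)+1)
          = (k:ℝ) * ∑ j ∈ Finset.range k, 1/((j:ℝ)+1) := by
        rw [Finset.mul_sum]
        apply Finset.sum_congr rfl
        intro j _
        ring
      rw [e3]
      have h4 := harm_le k
      exact mul_le_mul_of_nonneg_left h4 hkpos.le
    rw [hd1]
    linarith
  -- piece 2 : indices > 2k
  have hpiece2 : ∀ s : Finset ℕ, ∑ i ∈ s.filter (fun i => ¬ i ≤ 2*k), h i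
      ≤ (2/γ)*((k:ℝ)*Real.log k) := by
    intro s
    set t := s.filter (fun i => ¬ i ≤ 2*k) with ht
    have hmemt : ∀ i ∈ t, 2*k+1 ≤ i := by
      intro i hi
      have := (Finset.mem_filter.mp hi).2
      omega
    have hle : ∀ i ∈ t, h i ≤ 2*((k:ℝ)*L k) * (1/((i:ℝ) * Real.log i ^ (1+γ))) := by
      intro i hi
      have hik : 2*k < i := by have := hmemt i hi; omega
      rw [hmem i ⟨by omega, by omega⟩]
      have habs : |lam i - lam k| = lam k - lam i := by
        rw [abs_of_neg (by linarith [hgap_gt i (by omega)])]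
        ring
      rw [habs]
      exact hC2 i hik
    refine le_trans (Finset.sum_le_sum hle) ?_
    rw [← Finset.mul_sum]
    have htail := tail_sum hγ (2*k+1) (by omega) t hmemt
    have hm1 : (2*k+1) - 1 = 2*k := by omega
    rw [hm1] at htail
    have hlog2kpos : (0:ℝ) < Real.log ((2*k:ℕ):ℝ) := hlogpos (2*k) (by omega)
    have hlog2k : Real.log (k:ℝ) ≤ Real.log ((2*k:ℕ):ℝ) := by
      apply Real.log_le_log hkpos
      exact_mod_cast Nat.le_mul_of_pos_left k (by omega)
    have hrk : Real.log (k:ℝ) ^ γ ≤ Real.log ((2*k:ℕ):ℝ) ^ γ :=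
      Real.rpow_le_rpow hlogk.le hlog2k hγ.le
    have hrkpos : (0:ℝ) < Real.log (k:ℝ) ^ γ := rpow_pos_of_pos hlogk _
    have hrk2pos : (0:ℝ) < Real.log ((2*k:ℕ):ℝ) ^ γ := rpow_pos_of_pos hlog2kpos _
    have h2 : (1:ℝ)/(γ * Real.log ((2*k:ℕ):ℝ) ^ γ) ≤ 1/(γ * Real.log (k:ℝ) ^ γ) :=
      one_div_le_one_div_of_le (by positivity) (by nlinarith)
    calc 2*((k:ℝ)*L k) * ∑ i ∈ t, 1/((i:ℝ) * Real.log i ^ (1+γ))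
        ≤ 2*((k:ℝ)*L k) * (1/(γ * Real.log ((2*k:ℕ):ℝ) ^ γ)) := by
          apply mul_le_mul_of_nonneg_left htail (by positivity)
      _ ≤ 2*((k:ℝ)*L k) * (1/(γ * Real.log (k:ℝ) ^ γ)) := by
          apply mul_le_mul_of_nonneg_left h2 (by positivity)
      _ = (2/γ)*((k:ℝ)*Real.log k) := by
          have hLks : L k = Real.log (k:ℝ) * Real.log (k:ℝ) ^ γ := by
            simp only [hLdef]
            rw [Real.rpow_add hlogk, Real.rpow_one]
          rw [hLks]
          field_simp
  -- total finite sum bound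
  have hfinsum : ∀ s : Finset ℕ, ∑ i ∈ s, h i
      ≤ A + (2*(k:ℝ) + 2*(k:ℝ)*(1+Real.log k)) + (k:ℝ)*(1+Real.log k)
        + (2/γ)*((k:ℝ)*Real.log k) := by
    intro s
    rw [← Finset.sum_filter_add_sum_filter_not s (fun i => i ≤ 2*k) h]
    linarith [hpiece1 s, hpiece2 s]
  have htsum : ∑' i, h i
      ≤ A + (2*(k:ℝ) + 2*(k:ℝ)*(1+Real.log k)) + (k:ℝ)*(1+Real.log k)
        + (2/γ)*((k:ℝ)*Real.log k) :=
    Summable.tsum_le_of_sum_le hSummable hfinsum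
  have hsubty : (∑' i : {i : ℕ // 1 ≤ i ∧ i ≠ k}, lam i / |lam i - lam k|) = ∑' i, h i := by
    rw [hhdef]
    exact tsum_subtype S f
  -- delta term
  have hg2 : 0 < lam (k-1) - lam k := by
    have := hdec (k-1) k (by omega) (by omega)
    linarith
  have hq1 : lam k / (lam k - lam (k+1)) ≤ (k:ℝ)+1 := by
    have hH := hH4 k (k+1) hk (by omega)
    have hLk1pos : 0 < L (k+1) := hLpos (k+1) (by omega)
    have hLkk1 : L k ≤ L (k+1) := hLmono k (k+1) hk (by omega)
    have hlk : 0 < lam k := hpos k (by omega)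
    have hlk1 : 0 < lam (k+1) := hpos (k+1) (by omega)
    have hstep : ((k:ℝ)+1) * lam (k+1) ≤ (k:ℝ) * lam k := by
      have h1 : ((k:ℝ)+1) * lam (k+1) * L (k+1) ≤ (k:ℝ) * lam k * L (k+1) := by
        calc ((k:ℝ)+1) * lam (k+1) * L (k+1)
            = ((k+1:ℕ):ℝ) * lam (k+1) * L (k+1) := by push_cast; ring
          _ ≤ (k:ℝ) * lam k * L k := hH
          _ ≤ (k:ℝ) * lam k * L (k+1) := by
              nlinarith [mul_le_mul_of_nonneg_left hLkk1
                (by positivity : (0:ℝ) ≤ (k:ℝ)*lam k)]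
      exact le_of_mul_le_mul_right h1 hLk1pos
    rw [div_le_iff₀ hg1]
    nlinarith
  have hq2 : lam k / (lam (k-1) - lam k) ≤ A2 + 2*(2:ℝ)^γ*(k:ℝ) := by
    rcases eq_or_lt_of_le hk with hk2 | hk3
    · have hk2' : k = 2 := hk2.symm
      subst hk2'
      have e : (2-1 : ℕ) = 1 := by omega
      rw [e, ← hA2def]
      have h0 : (0:ℝ) ≤ 2*(2:ℝ)^γ*((2:ℕ):ℝ) := by positivity
      linarith
    · have hk3' : 3 ≤ k := hk3
      have hcast : ((k-1:ℕ):ℝ) = (k:ℝ) - 1 := by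
        push_cast [Nat.cast_sub (by omega : 1 ≤ k)]
        ring
      have hH := hH4 (k-1) k (by omega) (by omega)
      have hLk1pos : 0 < L (k-1) := hLpos (k-1) (by omega)
      have hLmono' : L (k-1) ≤ L k := hLmono (k-1) k (by omega) (by omega)
      have hlk : 0 < lam k := hpos k (by omega)
      have hlk1 : 0 < lam (k-1) := hpos (k-1) (by omega)
      have hlamlt : lam k < lam (k-1) := hdec (k-1) k (by omega) (by omega)
      have hstep1 : lam k / (lam (k-1) - lam k) ≤ (k:ℝ) * L k / L (k-1) := by
        rw [div_le_div_iff₀ hg2 hLk1pos]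
        have f2 : (k:ℝ) * lam (k-1) * L (k-1) ≤ (k:ℝ) * lam (k-1) * L k := by
          nlinarith [mul_le_mul_of_nonneg_left hLmono'
            (by positivity : (0:ℝ) ≤ (k:ℝ)*lam (k-1))]
        have f3 : lam k * L (k-1) ≤ lam (k-1) * L (k-1) := by nlinarith
        have hHL : (k:ℝ) * lam k * L k ≤ ((k:ℝ)-1) * lam (k-1) * L (k-1) := by
          simp only [hLdef]
          rw [← hcast]
          exact hH
        nlinarith [f2, f3, hHL]
      have hstep2 : (k:ℝ) * L k / L (k-1) ≤ 2*(2:ℝ)^γ*(k:ℝ) := by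
        rw [div_le_iff₀ hLk1pos]
        have hlogk1pos : 0 < Real.log ((k-1:ℕ):ℝ) := hlogpos (k-1) (by omega)
        have hlog2 : Real.log (k:ℝ) ≤ 2 * Real.log ((k-1:ℕ):ℝ) := by
          have hk3R : (3:ℝ) ≤ (k:ℝ) := by exact_mod_cast hk3'
          have h1 : (k:ℝ) ≤ ((k-1:ℕ):ℝ)^2 := by
            rw [hcast]
            nlinarith
          calc Real.log (k:ℝ) ≤ Real.log (((k-1:ℕ):ℝ)^2) :=
                Real.log_le_log hkpos h1
            _ = 2 * Real.log ((k-1:ℕ):ℝ) := by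
                rw [Real.log_pow]
                push_cast
                ring
        have hLkb : L k ≤ 2^(1+γ) * L (k-1) := by
          simp only [hLdef]
          calc Real.log (k:ℝ) ^ (1+γ) ≤ (2*Real.log ((k-1:ℕ):ℝ)) ^ (1+γ) :=
                Real.rpow_le_rpow hlogk.le hlog2 (by linarith)
            _ = 2^(1+γ) * Real.log ((k-1:ℕ):ℝ) ^ (1+γ) :=
                Real.mul_rpow (by norm_num) hlogk1pos.le
        have h2g : (2:ℝ)^(1+γ) = 2*(2:ℝ)^γ := by
          rw [Real.rpow_add (by norm_num : (0:ℝ) < 2), Real.rpow_one]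
        rw [h2g] at hLkb
        nlinarith [mul_le_mul_of_nonneg_left hLkb hkpos.le]
      exact (hstep1.trans hstep2).trans (by linarith [hA2pos])
  have hδterm : lam k / (min (lam k - lam (k+1)) (lam (k-1) - lam k) / 2)
      ≤ 2*((k:ℝ)+1) + 2*(A2 + 2*(2:ℝ)^γ*(k:ℝ)) := by
    have hminpos : 0 < min (lam k - lam (k+1)) (lam (k-1) - lam k) := lt_min hg1 hg2
    have hlk : 0 < lam k := hpos k (by omega)
    have heq2 : lam k / (min (lam k - lam (k+1)) (lam (k-1) - lam k) / 2)
        = 2 * (lam k / min (lam k - lam (k+1)) (lam (k-1) - lam k)) := by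
      rw [div_div_eq_mul_div]
      ring
    rw [heq2]
    rcases le_total (lam k - lam (k+1)) (lam (k-1) - lam k) with hm | hm
    · rw [min_eq_left hm]
      have h0 : (0:ℝ) ≤ A2 + 2*(2:ℝ)^γ*(k:ℝ) := by positivity
      linarith [hq1]
    · rw [min_eq_right hm]
      have hq1' : 0 ≤ (k:ℝ)+1 := by linarith
      linarith [hq2]
  -- final assembly
  rw [hsubty]
  have hx : Real.log 2 ≤ Real.log (k:ℝ) := Real.log_le_log (by norm_num) hkR
  have hx2 : (1:ℝ)/2 ≤ Real.log 2 := by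
    have := Real.log_two_gt_d9
    linarith
  set x := Real.log (k:ℝ) with hxdef
  have hxh : (1:ℝ)/2 ≤ x := by linarith
  have hKx : 1 ≤ (k:ℝ) * x := by nlinarith
  have e1 : A ≤ A * ((k:ℝ)*x) := by nlinarith [hApos]
  have e2 : 2*A2 ≤ 2*A2*((k:ℝ)*x) := by nlinarith [hA2pos]
  have e4 : 4*(2:ℝ)^γ*(k:ℝ) ≤ 8*(2:ℝ)^γ*((k:ℝ)*x) := by
    nlinarith [mul_nonneg (mul_nonneg (by positivity : (0:ℝ) ≤ 4*(2:ℝ)^γ) hkpos.le)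
      (by linarith : (0:ℝ) ≤ 2*x - 1)]
  have e5 : 2 + 7*(k:ℝ) + 3*((k:ℝ)*x) ≤ 19*((k:ℝ)*x) := by
    nlinarith [mul_nonneg hkpos.le (by linarith : (0:ℝ) ≤ 2*x - 1)]
  have hγx : (0:ℝ) ≤ 2/γ := by positivity
  nlinarith [htsum, hδterm, e1, e2, e4, e5]
end

section
/- Let (λ_j) satisfy c_E^{-1}e^{-j^a} ≤ λ_j ≤ c_E e^{-j^a} for constants a > 0, c_E ≥ 1, and let β be in the ellipsoid W_r^R. Then choosing m_n* ≍ (ln n)^{1/a}, the sum of bias and variance terms satisfies Σ_{j>m_n*} λ_j⟨β,ψ_j⟩² + σ²m_n*/n ≤ C n^{-1}(ln n)^{1/a} for a constant C independent of n (and uniform over β ∈ W_r^R). -/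
/-- Exponential eigenvalue decay: with `m_n* ≍ (ln n)^{1/a}`, the bias plus variance
term satisfies `∑_{j>m_n*} λ_j⟨β,ψ_j⟩² + σ²m_n*/n ≤ C n⁻¹(ln n)^{1/a}` uniformly over
the ellipsoid `W_r^R`. -/
theorem bias_variance_rate_exponential
    (a cE r R σ2 : ℝ) (ha : 0 < a) (hcE : 1 ≤ cE) (hr : 0 < r) (hR : 0 < R)
    (hσ : 0 < σ2)
    (lam : ℕ → ℝ)
    (hlow : ∀ j : ℕ, 1 ≤ j → cE⁻¹ * Real.exp (-(j : ℝ) ^ a) ≤ lam j)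
    (hup : ∀ j : ℕ, 1 ≤ j → lam j ≤ cE * Real.exp (-(j : ℝ) ^ a)) :
    ∃ C : ℝ, 0 < C ∧ ∀ n : ℕ, 2 ≤ n → ∀ b : ℕ → ℝ,
      (Summable fun j : ℕ => (j : ℝ) ^ r * (b j) ^ 2) →
      (∑' j : ℕ, (j : ℝ) ^ r * (b j) ^ 2 ≤ R ^ 2) →
      (∑' j : {j : ℕ // ⌈(Real.log n) ^ (1 / a)⌉₊ < j}, lam j * (b j) ^ 2)
          + σ2 * (⌈(Real.log n) ^ (1 / a)⌉₊ : ℝ) / n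
        ≤ C * (n : ℝ)⁻¹ * (Real.log n) ^ (1 / a) := by
  have hκ : 0 < (Real.log 2) ^ (1 / a) := Real.rpow_pos_of_pos (Real.log_pos one_lt_two) _
  set κ := (Real.log 2) ^ (1 / a) with hκdef
  refine ⟨cE * R ^ 2 / κ + σ2 * (1 + 1 / κ), by positivity, ?_⟩
  intro n hn b hsum hball
  have hn2 : (2 : ℝ) ≤ (n : ℝ) := by exact_mod_cast hn
  have hnpos : (0 : ℝ) < n := by linarith
  have hlogn : 0 < Real.log n := Real.log_pos (by linarith)
  set L := (Real.log n) ^ (1 / a) with hLdef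
  have hLpos : 0 < L := Real.rpow_pos_of_pos hlogn _
  have hκL : κ ≤ L := by
    rw [hκdef, hLdef]
    exact Real.rpow_le_rpow (Real.log_nonneg one_le_two)
      (Real.log_le_log two_pos hn2) (by positivity)
  set m := ⌈L⌉₊ with hmdef
  have hm1 : 1 ≤ m := Nat.one_le_iff_ne_zero.mpr (Nat.ceil_pos.mpr hLpos).ne'
  have hLm : L ≤ (m : ℝ) := Nat.le_ceil L
  have hmL : (m : ℝ) < L + 1 := Nat.ceil_lt_add_one hLpos.le
  -- key pointwise bound
  have key : ∀ j : ℕ, m < j → lam j * b j ^ 2 ≤ cE / n * ((j : ℝ) ^ r * b j ^ 2) := by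
    intro j hj
    have hj1 : 1 ≤ j := le_trans hm1 hj.le
    have hjR : (1 : ℝ) ≤ (j : ℝ) := by exact_mod_cast hj1
    have hjL : L ≤ (j : ℝ) := le_trans hLm (by exact_mod_cast hj.le)
    have hja : Real.log n ≤ (j : ℝ) ^ a := by
      have h1 : L ^ a ≤ (j : ℝ) ^ a := Real.rpow_le_rpow hLpos.le hjL ha.le
      rwa [← Real.rpow_mul hlogn.le, one_div, inv_mul_cancel₀ ha.ne',
        Real.rpow_one] at h1
    have hexp : Real.exp (-(j : ℝ) ^ a) ≤ (n : ℝ)⁻¹ := by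
      calc Real.exp (-(j : ℝ) ^ a) ≤ Real.exp (-Real.log n) :=
            Real.exp_le_exp.mpr (by linarith)
        _ = (n : ℝ)⁻¹ := by rw [Real.exp_neg, Real.exp_log hnpos]
    have hlam : lam j ≤ cE / n := by
      calc lam j ≤ cE * Real.exp (-(j : ℝ) ^ a) := hup j hj1
        _ ≤ cE * (n : ℝ)⁻¹ := by
            exact mul_le_mul_of_nonneg_left hexp (by linarith)
        _ = cE / n := by rw [div_eq_mul_inv]
    have hjr : (1 : ℝ) ≤ (j : ℝ) ^ r := Real.one_le_rpow hjR hr.le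
    have hb2 : (0 : ℝ) ≤ b j ^ 2 := sq_nonneg _
    have hlam0 : 0 ≤ lam j := le_trans (by positivity) (hlow j hj1)
    calc lam j * b j ^ 2 ≤ (cE / n) * b j ^ 2 :=
          mul_le_mul_of_nonneg_right hlam hb2
      _ ≤ cE / n * ((j : ℝ) ^ r * b j ^ 2) := by
          have hcEn : (0 : ℝ) ≤ cE / n := by positivity
          nlinarith [mul_le_mul_of_nonneg_right hjr hb2]
  -- summability
  have hsumS : Summable (fun j : {j : ℕ // m < j} => ((j : ℕ) : ℝ) ^ r * b j ^ 2) :=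
    hsum.subtype _
  have hg : Summable (fun j : {j : ℕ // m < j} => cE / n * (((j : ℕ) : ℝ) ^ r * b j ^ 2)) :=
    hsumS.mul_left _
  have hnn : ∀ j : {j : ℕ // m < j}, 0 ≤ lam j * b j ^ 2 := by
    intro j
    have hj1 : 1 ≤ (j : ℕ) := le_trans hm1 j.2.le
    have hlam0 : 0 ≤ lam j := le_trans (by positivity) (hlow j hj1)
    positivity
  have hf : Summable (fun j : {j : ℕ // m < j} => lam j * b j ^ 2) :=
    Summable.of_nonneg_of_le hnn (fun j => key j j.2) hg
  -- bias bound
  have hsnonneg : ∀ j : ℕ, 0 ≤ (j : ℝ) ^ r * b j ^ 2 := by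
    intro j; positivity
  have hbias : (∑' j : {j : ℕ // m < j}, lam j * b j ^ 2) ≤ cE / n * R ^ 2 := by
    calc (∑' j : {j : ℕ // m < j}, lam j * b j ^ 2)
        ≤ ∑' j : {j : ℕ // m < j}, cE / n * (((j : ℕ) : ℝ) ^ r * b j ^ 2) :=
          Summable.tsum_le_tsum (fun j => key j j.2) hf hg
      _ = cE / n * ∑' j : {j : ℕ // m < j}, (((j : ℕ) : ℝ) ^ r * b j ^ 2) := tsum_mul_left
      _ ≤ cE / n * ∑' j : ℕ, ((j : ℝ) ^ r * b j ^ 2) := by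
          have := Summable.tsum_subtype_le (fun j : ℕ => (j : ℝ) ^ r * b j ^ 2)
            {j : ℕ | m < j} hsnonneg hsum
          exact mul_le_mul_of_nonneg_left this (by positivity)
      _ ≤ cE / n * R ^ 2 := mul_le_mul_of_nonneg_left hball (by positivity)
  -- variance bound
  have h1 : (1 : ℝ) ≤ L / κ := (one_le_div hκ).mpr hκL
  have hninv : (0 : ℝ) < (n : ℝ)⁻¹ := by positivity
  have hbias' : cE / n * R ^ 2 ≤ cE * R ^ 2 / κ * ((n : ℝ)⁻¹ * L) := by
    have : cE * R ^ 2 ≤ cE * R ^ 2 / κ * L := by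
      rw [div_mul_eq_mul_div, le_div_iff₀ hκ]
      exact mul_le_mul_of_nonneg_left hκL (by positivity)
    calc cE / n * R ^ 2 = cE * R ^ 2 * (n : ℝ)⁻¹ := by ring
      _ ≤ cE * R ^ 2 / κ * L * (n : ℝ)⁻¹ :=
          mul_le_mul_of_nonneg_right this hninv.le
      _ = cE * R ^ 2 / κ * ((n : ℝ)⁻¹ * L) := by ring
  have hvar : σ2 * (m : ℝ) / n ≤ σ2 * (1 + 1 / κ) * ((n : ℝ)⁻¹ * L) := by
    have hmle : (m : ℝ) ≤ (1 + 1 / κ) * L := by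
      have : (1 : ℝ) ≤ L / κ := h1
      have hLκ : 1 ≤ L * (1 / κ) := by rwa [mul_one_div]
      nlinarith
    calc σ2 * (m : ℝ) / n = σ2 * (m : ℝ) * (n : ℝ)⁻¹ := by rw [div_eq_mul_inv]
      _ ≤ σ2 * ((1 + 1 / κ) * L) * (n : ℝ)⁻¹ := by
          apply mul_le_mul_of_nonneg_right _ hninv.le
          exact mul_le_mul_of_nonneg_left hmle hσ.le
      _ = σ2 * (1 + 1 / κ) * ((n : ℝ)⁻¹ * L) := by ring
  calc (∑' j : {j : ℕ // m < j}, lam j * b j ^ 2) + σ2 * (m : ℝ) / n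
      ≤ cE * R ^ 2 / κ * ((n : ℝ)⁻¹ * L) + σ2 * (1 + 1 / κ) * ((n : ℝ)⁻¹ * L) := by
        have := le_trans hbias hbias'
        linarith
    _ = (cE * R ^ 2 / κ + σ2 * (1 + 1 / κ)) * (n : ℝ)⁻¹ * L := by ring
end
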